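/- Suppose premiums are adjusted according to the reported number of claims. Then for every integer u ≥ 0, every i ∈ {1,…,l} and every n ≥ 1: ψ_i(u,n+1) = Σ_{j=1}^l t_{ij}(0)·ψ_j(u+c_i, n)·f_{XY}(0,0) + Σ_{j=1}^l t_{ij}(1)·Σ_{x=1}^{u+c_i} ψ_j(u+c_i−x, n)·f_{XY}(x,0) + Σ_{j=1}^l t_{ij}(2)·[ Σ_{x=1}^{u+c_i−1} Σ_{y=1}^{u+c_i−x} ψ_j(u+c_i−x−y, n)·f_{XY}(x,y) + q·Σ_{y=1}^{c_j} ψ'_j(0;y,n)·ξ_y(u+c_i) + q·Σ_{y=c_j+1}^∞ ξ_y(u+c_i) ] + (1−q)·Σ_{y=1}^∞ ξ_y(u+c_i) + Σ_{x=u+c_i+1}^∞ f_X(x), and moreover ψ_i(u,1) = (1−q)·Σ_{y=1}^∞ ξ_y(u+c_i) + Σ_{x=u+c_i+1}^∞ f_X(x). -/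

import Mathlib

open scoped BigOperators

noncomputable section

namespace DelayedClaims

/-- Marginal pmf of the main claim: `f_X(x) = Σ_y f_{XY}(x,y)`. -/
def fX (f : ℕ → ℕ → ℝ) (x : ℕ) : ℝ := ∑' y : ℕ, f x y

/-- `ξ_y(m) = Σ_{x=1}^m f_{XY}(x, y + m - x)`. -/
def xi (f : ℕ → ℕ → ℝ) (y m : ℕ) : ℝ := ∑ x ∈ Finset.Icc 1 m, f x (y + m - x)

/-- Probability weight of a single period outcome `(x, y, d)`:
`d = true` means the settlement of the by-claim `y` is delayed (probability `q`). -/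
def w (f : ℕ → ℕ → ℝ) (q : ℝ) (p : ℕ × ℕ × Bool) : ℝ :=
  f p.1 p.2.1 * (if p.2.2 then q else 1 - q)

/-- Probability weight of an `n`-period path of i.i.d. period outcomes. -/
def pathWeight (f : ℕ → ℕ → ℝ) (q : ℝ) (n : ℕ) (ω : Fin n → ℕ × ℕ × Bool) : ℝ :=
  ∏ s : Fin n, w f q (ω s)

/-- Ruin indicator along a path.  Here `c` lists the premium levels,
`T i s` is the premium level following level `i` when the period adjustment
statistic equals `s`, `stat x y d carry` is the period adjustment statistic,
`i` is the current premium level, `u` the current surplus, and `carry` the amount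
of the by-claim whose settlement was delayed from the previous period (`0` if none).
In each period the premium `c i` is received up front and the settled amount
`x + (1-d)·y + carry` is paid at the end of the period; ruin occurs as soon as
the surplus becomes negative at the end of some period. -/
def ruined (l : ℕ) (c : Fin l → ℕ) (T : Fin l → ℕ → Fin l)
    (stat : ℕ → ℕ → Bool → ℕ → ℕ) :
    (n : ℕ) → (Fin n → ℕ × ℕ × Bool) → Fin l → ℤ → ℕ → Bool
  | 0, _, _, _, _ => false
  | n + 1, ω, i, u, carry =>
    let x : ℕ := (ω 0).1
    let y : ℕ := (ω 0).2.1
    let d : Bool := (ω 0).2.2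
    let u' : ℤ := u + (c i : ℤ) - ((x : ℤ) + (if d then 0 else (y : ℤ)) + (carry : ℤ))
    if u' < 0 then true
    else ruined l c T stat n (fun s => ω s.succ) (T i (stat x y d carry)) u'
      (if d then y else 0)

/-- `ψ'_i(u; z, n)`: the finite-time ruin probability over horizon `n` of the model with
an up-front delayed by-claim `z` settled at the end of period 1 (taking `z = 0` gives the
model without an up-front delayed by-claim), with initial premium level `i` and
initial surplus `u`.  By convention it equals `1` for `u < 0` and `0` for `n = 0`. -/
def psiAux (l : ℕ) (c : Fin l → ℕ) (T : Fin l → ℕ → Fin l)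
    (stat : ℕ → ℕ → Bool → ℕ → ℕ) (f : ℕ → ℕ → ℝ) (q : ℝ)
    (i : Fin l) (u : ℤ) (z : ℕ) (n : ℕ) : ℝ :=
  if u < 0 then 1
  else ∑' ω : Fin n → ℕ × ℕ × Bool,
    pathWeight f q n ω * (if ruined l c T stat n ω i u z then 1 else 0)

/-- `ψ_i(u, n)`: finite-time ruin probability without an up-front delayed by-claim. -/
def psi (l : ℕ) (c : Fin l → ℕ) (T : Fin l → ℕ → Fin l)
    (stat : ℕ → ℕ → Bool → ℕ → ℕ) (f : ℕ → ℕ → ℝ) (q : ℝ)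
    (i : Fin l) (u : ℤ) (n : ℕ) : ℝ :=
  psiAux l c T stat f q i u 0 n

/-- Adjustment statistic: aggregate reported claims `X + Y`. -/
def statRep (x y : ℕ) (_ : Bool) (_ : ℕ) : ℕ := x + y

/-- Adjustment statistic: aggregate settled claims `X + (1-D)·Y + carry`. -/
def statSet (x y : ℕ) (d : Bool) (carry : ℕ) : ℕ := x + (if d then 0 else y) + carry

/-- Adjustment statistic: reported number of claims `1{X>0} + 1{Y>0}`. -/
def statRepN (x y : ℕ) (_ : Bool) (_ : ℕ) : ℕ :=
  (if 0 < x then 1 else 0) + (if 0 < y then 1 else 0)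

/-- Adjustment statistic: settled number of claims
`1{X>0} + 1{Y>0 and not delayed} + 1{delayed by-claim from the previous period}`. -/
def statSetN (x y : ℕ) (d : Bool) (carry : ℕ) : ℕ :=
  (if 0 < x then 1 else 0) + (if 0 < y ∧ d = false then 1 else 0) +
    (if 0 < carry then 1 else 0)

section Infra

variable {l : ℕ} {c : Fin l → ℕ} {T : Fin l → ℕ → Fin l}
  {stat : ℕ → ℕ → Bool → ℕ → ℕ} {f : ℕ → ℕ → ℝ} {q : ℝ}

lemma summable_f (hfsum : ∑' p : ℕ × ℕ, f p.1 p.2 = 1) :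
    Summable (fun p : ℕ × ℕ => f p.1 p.2) := by
  by_contra h
  rw [tsum_eq_zero_of_not_summable h] at hfsum
  norm_num at hfsum

lemma w_nonneg (hfnn : ∀ x y, 0 ≤ f x y) (hq0 : 0 ≤ q) (hq1 : q ≤ 1)
    (p : ℕ × ℕ × Bool) : 0 ≤ w f q p := by
  refine mul_nonneg (hfnn _ _) ?_
  split <;> linarith

lemma summable_w (hfnn : ∀ x y, 0 ≤ f x y) (hfsum : ∑' p : ℕ × ℕ, f p.1 p.2 = 1)
    (hq0 : 0 ≤ q) (hq1 : q ≤ 1) : Summable (w f q) := by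
  have hF := summable_f hfsum
  have hB : Summable (fun b : Bool => if b then q else 1 - q) := Summable.of_finite
  have h2 : Summable (fun pr : (ℕ × ℕ) × Bool =>
      f pr.1.1 pr.1.2 * (if pr.2 then q else 1 - q)) :=
    Summable.mul_of_nonneg (f := fun p : ℕ × ℕ => f p.1 p.2)
      (g := fun b : Bool => if b then q else 1 - q) hF hB
      (fun p => hfnn _ _) (fun b => by simp only [Pi.zero_apply]; split <;> linarith)
  have h3 : (w f q) ∘ (Equiv.prodAssoc ℕ ℕ Bool) = fun pr : (ℕ × ℕ) × Bool =>
      f pr.1.1 pr.1.2 * (if pr.2 then q else 1 - q) := by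
    funext pr
    simp [w, Equiv.prodAssoc, Function.comp]
    by_cases h : pr.2 = true <;> simp [h]
  exact (Equiv.summable_iff (Equiv.prodAssoc ℕ ℕ Bool) (f := w f q)).mp (by rw [h3]; exact h2)

lemma tsum_w (hfnn : ∀ x y, 0 ≤ f x y) (hfsum : ∑' p : ℕ × ℕ, f p.1 p.2 = 1)
    (hq0 : 0 ≤ q) (hq1 : q ≤ 1) : ∑' p : ℕ × ℕ × Bool, w f q p = 1 := by
  have hw := summable_w hfnn hfsum hq0 hq1
  rw [← Equiv.tsum_eq (Equiv.prodAssoc ℕ ℕ Bool) (w f q)]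
  have h2 : Summable (w f q ∘ (Equiv.prodAssoc ℕ ℕ Bool)) :=
    (Equiv.summable_iff (Equiv.prodAssoc ℕ ℕ Bool) (f := w f q)).mpr hw
  have h2' : Summable (fun pr : (ℕ × ℕ) × Bool => w f q (Equiv.prodAssoc ℕ ℕ Bool pr)) := h2
  rw [Summable.tsum_prod h2']
  have h3 : ∀ p : ℕ × ℕ, (∑' b : Bool, w f q (Equiv.prodAssoc ℕ ℕ Bool (p, b))) = f p.1 p.2 := by
    intro p
    rw [tsum_bool]
    simp only [Equiv.prodAssoc_apply, w]
    ring_nf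
    simp
    ring
  rw [tsum_congr h3]
  exact hfsum

lemma pathWeight_nonneg (hfnn : ∀ x y, 0 ≤ f x y) (hq0 : 0 ≤ q) (hq1 : q ≤ 1)
    (n : ℕ) (ω : Fin n → ℕ × ℕ × Bool) : 0 ≤ pathWeight f q n ω :=
  Finset.prod_nonneg fun s _ => w_nonneg hfnn hq0 hq1 _

lemma pathWeight_cons (n : ℕ) (a : ℕ × ℕ × Bool) (τ : Fin n → ℕ × ℕ × Bool) :
    pathWeight f q (n + 1) (Fin.cons a τ) = w f q a * pathWeight f q n τ := by
  unfold pathWeight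
  rw [Fin.prod_univ_succ]
  simp [Fin.cons_succ]

lemma summable_pathWeight (hfnn : ∀ x y, 0 ≤ f x y) (hfsum : ∑' p : ℕ × ℕ, f p.1 p.2 = 1)
    (hq0 : 0 ≤ q) (hq1 : q ≤ 1) (n : ℕ) : Summable (pathWeight f q n) := by
  induction n with
  | zero =>
      haveI : Finite (Fin 0 → ℕ × ℕ × Bool) := Finite.of_subsingleton
      exact Summable.of_finite
  | succ n ih =>
      have h2 : Summable (fun pr : (ℕ × ℕ × Bool) × (Fin n → ℕ × ℕ × Bool) =>
          w f q pr.1 * pathWeight f q n pr.2) :=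
        Summable.mul_of_nonneg (f := w f q) (g := pathWeight f q n)
          (summable_w hfnn hfsum hq0 hq1) ih (w_nonneg hfnn hq0 hq1)
          (pathWeight_nonneg hfnn hq0 hq1 n)
      refine (Equiv.summable_iff (Fin.consEquiv fun _ : Fin (n + 1) => (ℕ × ℕ × Bool))
        (f := pathWeight f q (n + 1))).mp ?_
      have h3 : (pathWeight f q (n + 1)) ∘ (Fin.consEquiv fun _ : Fin (n + 1) => (ℕ × ℕ × Bool))
          = fun pr => w f q pr.1 * pathWeight f q n pr.2 := by
        funext pr
        exact pathWeight_cons n pr.1 pr.2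
      rw [h3]
      exact h2

lemma tsum_pathWeight (hfnn : ∀ x y, 0 ≤ f x y) (hfsum : ∑' p : ℕ × ℕ, f p.1 p.2 = 1)
    (hq0 : 0 ≤ q) (hq1 : q ≤ 1) (n : ℕ) :
    ∑' ω : Fin n → ℕ × ℕ × Bool, pathWeight f q n ω = 1 := by
  induction n with
  | zero =>
      rw [tsum_eq_single (default : Fin 0 → ℕ × ℕ × Bool)
        (fun b hb => absurd (Subsingleton.elim b default) hb)]
      simp [pathWeight]
  | succ n ih =>
      rw [← Equiv.tsum_eq (Fin.consEquiv fun _ : Fin (n + 1) => (ℕ × ℕ × Bool))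
        (pathWeight f q (n + 1))]
      have hcons : ∀ pr : (ℕ × ℕ × Bool) × (Fin n → ℕ × ℕ × Bool),
          pathWeight f q (n + 1) ((Fin.consEquiv fun _ : Fin (n + 1) => (ℕ × ℕ × Bool)) pr)
            = w f q pr.1 * pathWeight f q n pr.2 := fun pr => pathWeight_cons n pr.1 pr.2
      rw [tsum_congr hcons]
      have h2 : Summable (fun pr : (ℕ × ℕ × Bool) × (Fin n → ℕ × ℕ × Bool) =>
          w f q pr.1 * pathWeight f q n pr.2) :=
        Summable.mul_of_nonneg (f := w f q) (g := pathWeight f q n)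
          (summable_w hfnn hfsum hq0 hq1) (summable_pathWeight hfnn hfsum hq0 hq1 n)
          (w_nonneg hfnn hq0 hq1) (pathWeight_nonneg hfnn hq0 hq1 n)
      rw [Summable.tsum_prod h2]
      have h3 : ∀ a : ℕ × ℕ × Bool,
          (∑' τ : Fin n → ℕ × ℕ × Bool, w f q a * pathWeight f q n τ) = w f q a := by
        intro a
        rw [tsum_mul_left, ih, mul_one]
      rw [tsum_congr h3]
      exact tsum_w hfnn hfsum hq0 hq1

lemma ruined_succ (n : ℕ) (ω : Fin (n + 1) → ℕ × ℕ × Bool) (i : Fin l) (u : ℤ) (carry : ℕ) :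
    ruined l c T stat (n + 1) ω i u carry =
      (if u + (c i : ℤ) - (((ω 0).1 : ℤ) + (if (ω 0).2.2 then 0 else ((ω 0).2.1 : ℤ))
          + (carry : ℤ)) < 0 then true
       else ruined l c T stat n (fun s => ω s.succ) (T i (stat (ω 0).1 (ω 0).2.1 (ω 0).2.2 carry))
         (u + (c i : ℤ) - (((ω 0).1 : ℤ) + (if (ω 0).2.2 then 0 else ((ω 0).2.1 : ℤ))
          + (carry : ℤ)))
         (if (ω 0).2.2 then (ω 0).2.1 else 0)) := rfl

lemma ruined_shift (n : ℕ) (ω : Fin n → ℕ × ℕ × Bool) (j : Fin l) (u₁ u₂ : ℤ) (z₁ z₂ : ℕ)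
    (h : u₁ - (z₁ : ℤ) = u₂ - (z₂ : ℤ)) :
    ruined l c T statRepN n ω j u₁ z₁ = ruined l c T statRepN n ω j u₂ z₂ := by
  cases n with
  | zero => rfl
  | succ n =>
      rw [ruined_succ, ruined_succ]
      have harg : u₁ + (c j : ℤ) - (((ω 0).1 : ℤ) + (if (ω 0).2.2 then 0 else ((ω 0).2.1 : ℤ))
          + (z₁ : ℤ)) = u₂ + (c j : ℤ) - (((ω 0).1 : ℤ)
          + (if (ω 0).2.2 then 0 else ((ω 0).2.1 : ℤ)) + (z₂ : ℤ)) := by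
        set e := (if (ω 0).2.2 then (0 : ℤ) else ((ω 0).2.1 : ℤ)) with he
        linarith
      rw [harg]
      rfl

lemma psiAux_shift (j : Fin l) (u₁ u₂ : ℤ) (z₁ z₂ : ℕ) (h1 : 0 ≤ u₁) (h2 : 0 ≤ u₂)
    (h : u₁ - (z₁ : ℤ) = u₂ - (z₂ : ℤ)) (n : ℕ) :
    psiAux l c T statRepN f q j u₁ z₁ n = psiAux l c T statRepN f q j u₂ z₂ n := by
  unfold psiAux
  rw [if_neg (not_lt.mpr h1), if_neg (not_lt.mpr h2)]
  exact tsum_congr fun ω => by rw [ruined_shift n ω j u₁ u₂ z₁ z₂ h]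

lemma psiAux_zero (j : Fin l) (u : ℤ) (z : ℕ) :
    psiAux l c T stat f q j u z 0 = if u < 0 then 1 else 0 := by
  unfold psiAux
  split
  · rfl
  · have h : ∀ ω : Fin 0 → ℕ × ℕ × Bool, ruined l c T stat 0 ω j u z = false := fun _ => rfl
    simp [h]

lemma psiAux_nonneg (hfnn : ∀ x y, 0 ≤ f x y) (hq0 : 0 ≤ q) (hq1 : q ≤ 1)
    (j : Fin l) (u : ℤ) (z n : ℕ) : 0 ≤ psiAux l c T stat f q j u z n := by
  unfold psiAux
  split
  · norm_num
  · exact tsum_nonneg fun ω => mul_nonneg (pathWeight_nonneg hfnn hq0 hq1 n ω)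
      (by split <;> norm_num)

lemma summable_ind (hfnn : ∀ x y, 0 ≤ f x y) (hfsum : ∑' p : ℕ × ℕ, f p.1 p.2 = 1)
    (hq0 : 0 ≤ q) (hq1 : q ≤ 1) (n : ℕ) (P : (Fin n → ℕ × ℕ × Bool) → Bool) :
    Summable (fun ω => pathWeight f q n ω * (if P ω then (1 : ℝ) else 0)) :=
  Summable.of_nonneg_of_le
    (fun ω => mul_nonneg (pathWeight_nonneg hfnn hq0 hq1 n ω) (by split <;> norm_num))
    (fun ω => mul_le_of_le_one_right (pathWeight_nonneg hfnn hq0 hq1 n ω)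
      (by split <;> norm_num))
    (summable_pathWeight hfnn hfsum hq0 hq1 n)

lemma psiAux_le_one (hfnn : ∀ x y, 0 ≤ f x y) (hfsum : ∑' p : ℕ × ℕ, f p.1 p.2 = 1)
    (hq0 : 0 ≤ q) (hq1 : q ≤ 1)
    (j : Fin l) (u : ℤ) (z n : ℕ) : psiAux l c T stat f q j u z n ≤ 1 := by
  unfold psiAux
  split
  · exact le_refl 1
  · calc (∑' ω : Fin n → ℕ × ℕ × Bool,
        pathWeight f q n ω * (if ruined l c T stat n ω j u z then (1:ℝ) else 0))
        ≤ ∑' ω : Fin n → ℕ × ℕ × Bool, pathWeight f q n ω :=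
          Summable.tsum_le_tsum
            (fun ω => mul_le_of_le_one_right (pathWeight_nonneg hfnn hq0 hq1 n ω)
              (by split <;> norm_num))
            (summable_ind hfnn hfsum hq0 hq1 n _)
            (summable_pathWeight hfnn hfsum hq0 hq1 n)
      _ = 1 := tsum_pathWeight hfnn hfsum hq0 hq1 n

lemma psiAux_certain (hfnn : ∀ x y, 0 ≤ f x y) (hfsum : ∑' p : ℕ × ℕ, f p.1 p.2 = 1)
    (hq0 : 0 ≤ q) (hq1 : q ≤ 1) (j : Fin l) (z n : ℕ) (hz : c j < z) (hn : 1 ≤ n) :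
    psiAux l c T statRepN f q j 0 z n = 1 := by
  obtain ⟨n, rfl⟩ : ∃ n', n = n' + 1 := ⟨n - 1, by omega⟩
  unfold psiAux
  rw [if_neg (by norm_num)]
  have hruin : ∀ ω : Fin (n + 1) → ℕ × ℕ × Bool,
      ruined l c T statRepN (n + 1) ω j 0 z = true := by
    intro ω
    rw [ruined_succ, if_pos]
    have he : (0 : ℤ) ≤ (if (ω 0).2.2 then (0:ℤ) else ((ω 0).2.1 : ℤ)) := by
      split <;> positivity
    set e := (if (ω 0).2.2 then (0:ℤ) else ((ω 0).2.1 : ℤ)) with hedef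
    omega
  have h4 : (fun ω : Fin (n + 1) → ℕ × ℕ × Bool => pathWeight f q (n + 1) ω *
      (if ruined l c T statRepN (n + 1) ω j 0 z then (1:ℝ) else 0))
      = pathWeight f q (n + 1) := by
    funext ω
    rw [hruin ω]
    simp
  rw [h4]
  exact tsum_pathWeight hfnn hfsum hq0 hq1 (n + 1)


lemma summable_wstep (hfnn : ∀ x y, 0 ≤ f x y) (hfsum : ∑' p : ℕ × ℕ, f p.1 p.2 = 1)
    (hq0 : 0 ≤ q) (hq1 : q ≤ 1) (step : ℕ × ℕ × Bool → ℝ)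
    (h0 : ∀ a, 0 ≤ step a) (h1 : ∀ a, step a ≤ 1) :
    Summable (fun a => w f q a * step a) :=
  Summable.of_nonneg_of_le (fun a => mul_nonneg (w_nonneg hfnn hq0 hq1 a) (h0 a))
    (fun a => mul_le_of_le_one_right (w_nonneg hfnn hq0 hq1 a) (h1 a))
    (summable_w hfnn hfsum hq0 hq1)

lemma psiAux_step (hfnn : ∀ x y, 0 ≤ f x y) (hfsum : ∑' p : ℕ × ℕ, f p.1 p.2 = 1)
    (hq0 : 0 ≤ q) (hq1 : q ≤ 1) (i : Fin l) (u : ℤ) (hu : 0 ≤ u) (z n : ℕ) :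
    psiAux l c T stat f q i u z (n + 1) =
      ∑' a : ℕ × ℕ × Bool, w f q a *
        (if u + (c i : ℤ) - ((a.1 : ℤ) + (if a.2.2 then 0 else (a.2.1 : ℤ)) + (z : ℤ)) < 0
         then 1
         else psiAux l c T stat f q (T i (stat a.1 a.2.1 a.2.2 z))
           (u + (c i : ℤ) - ((a.1 : ℤ) + (if a.2.2 then 0 else (a.2.1 : ℤ)) + (z : ℤ)))
           (if a.2.2 then a.2.1 else 0) n) := by
  conv_lhs => rw [psiAux]
  rw [if_neg (not_lt.mpr hu)]
  rw [← Equiv.tsum_eq (Fin.consEquiv fun _ : Fin (n + 1) => (ℕ × ℕ × Bool))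
    (fun ω => pathWeight f q (n + 1) ω *
      (if ruined l c T stat (n + 1) ω i u z then (1 : ℝ) else 0))]
  have hsum : Summable (fun pr : (ℕ × ℕ × Bool) × (Fin n → ℕ × ℕ × Bool) =>
      pathWeight f q (n + 1) ((Fin.consEquiv fun _ : Fin (n + 1) => (ℕ × ℕ × Bool)) pr) *
      (if ruined l c T stat (n + 1)
          ((Fin.consEquiv fun _ : Fin (n + 1) => (ℕ × ℕ × Bool)) pr) i u z
        then (1 : ℝ) else 0)) :=
    (Equiv.summable_iff (Fin.consEquiv fun _ : Fin (n + 1) => (ℕ × ℕ × Bool))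
      (f := fun ω => pathWeight f q (n + 1) ω *
        (if ruined l c T stat (n + 1) ω i u z then (1 : ℝ) else 0))).mpr
      (summable_ind hfnn hfsum hq0 hq1 (n + 1) (fun ω => ruined l c T stat (n + 1) ω i u z))
  rw [Summable.tsum_prod hsum]
  refine tsum_congr fun a => ?_
  have hx : ∀ τ : Fin n → ℕ × ℕ × Bool,
      pathWeight f q (n + 1) ((Fin.consEquiv fun _ : Fin (n + 1) => (ℕ × ℕ × Bool)) (a, τ))
        = w f q a * pathWeight f q n τ := fun τ => pathWeight_cons n a τ
  have hr : ∀ τ : Fin n → ℕ × ℕ × Bool,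
      ruined l c T stat (n + 1)
          ((Fin.consEquiv fun _ : Fin (n + 1) => (ℕ × ℕ × Bool)) (a, τ)) i u z
        = (if u + (c i : ℤ) - ((a.1 : ℤ) + (if a.2.2 then 0 else (a.2.1 : ℤ)) + (z : ℤ)) < 0
           then true
           else ruined l c T stat n τ (T i (stat a.1 a.2.1 a.2.2 z))
             (u + (c i : ℤ) - ((a.1 : ℤ) + (if a.2.2 then 0 else (a.2.1 : ℤ)) + (z : ℤ)))
             (if a.2.2 then a.2.1 else 0)) := by
    intro τ
    have hc : ((Fin.consEquiv fun _ : Fin (n + 1) => (ℕ × ℕ × Bool)) (a, τ)) = Fin.cons a τ := rfl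
    rw [hc, ruined_succ]
    simp only [Fin.cons_zero, Fin.cons_succ]
  by_cases hcase : u + (c i : ℤ) - ((a.1 : ℤ) + (if a.2.2 then 0 else (a.2.1 : ℤ)) + (z : ℤ)) < 0
  · have h1 : ∀ τ : Fin n → ℕ × ℕ × Bool,
        pathWeight f q (n + 1) ((Fin.consEquiv fun _ : Fin (n + 1) => (ℕ × ℕ × Bool)) (a, τ)) *
          (if ruined l c T stat (n + 1)
              ((Fin.consEquiv fun _ : Fin (n + 1) => (ℕ × ℕ × Bool)) (a, τ)) i u z
            then (1 : ℝ) else 0)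
          = w f q a * pathWeight f q n τ := by
      intro τ
      rw [hx τ, hr τ, if_pos hcase]
      simp
    rw [tsum_congr h1, tsum_mul_left, tsum_pathWeight hfnn hfsum hq0 hq1 n, mul_one,
      if_pos hcase, mul_one]
  · have h1 : ∀ τ : Fin n → ℕ × ℕ × Bool,
        pathWeight f q (n + 1) ((Fin.consEquiv fun _ : Fin (n + 1) => (ℕ × ℕ × Bool)) (a, τ)) *
          (if ruined l c T stat (n + 1)
              ((Fin.consEquiv fun _ : Fin (n + 1) => (ℕ × ℕ × Bool)) (a, τ)) i u z
            then (1 : ℝ) else 0)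
          = w f q a * (pathWeight f q n τ *
              (if ruined l c T stat n τ (T i (stat a.1 a.2.1 a.2.2 z))
                  (u + (c i : ℤ) - ((a.1 : ℤ) + (if a.2.2 then 0 else (a.2.1 : ℤ)) + (z : ℤ)))
                  (if a.2.2 then a.2.1 else 0)
                then (1 : ℝ) else 0)) := by
      intro τ
      rw [hx τ, hr τ, if_neg hcase, mul_assoc]
    rw [tsum_congr h1, tsum_mul_left, if_neg hcase]
    congr 1
    rw [psiAux, if_neg (not_lt.mpr (not_lt.mp hcase))]


lemma ite_psiAux_nonneg (hfnn : ∀ x y, 0 ≤ f x y) (hq0 : 0 ≤ q) (hq1 : q ≤ 1)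
    (n : ℕ) (P : Prop) (inst : Decidable P) (j : Fin l) (v : ℤ) (z : ℕ) :
    0 ≤ (if P then (1 : ℝ) else psiAux l c T stat f q j v z n) := by
  split
  · norm_num
  · exact psiAux_nonneg hfnn hq0 hq1 j v z n

lemma ite_psiAux_le_one (hfnn : ∀ x y, 0 ≤ f x y) (hfsum : ∑' p : ℕ × ℕ, f p.1 p.2 = 1)
    (hq0 : 0 ≤ q) (hq1 : q ≤ 1)
    (n : ℕ) (P : Prop) (inst : Decidable P) (j : Fin l) (v : ℤ) (z : ℕ) :
    (if P then (1 : ℝ) else psiAux l c T stat f q j v z n) ≤ 1 := by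
  split
  · norm_num
  · exact psiAux_le_one hfnn hfsum hq0 hq1 j v z n

end Infra

/-- One-步 summand. -/
def onestep (l : ℕ) (c : Fin l → ℕ) (T : Fin l → ℕ → Fin l) (f : ℕ → ℕ → ℝ) (q : ℝ)
    (i : Fin l) (u : ℤ) (n : ℕ) (a : ℕ × ℕ × Bool) : ℝ :=
  w f q a *
    (if u + (c i : ℤ) - ((a.1 : ℤ) + (if a.2.2 then 0 else (a.2.1 : ℤ)) + (((0:ℕ)) : ℤ)) < 0
     then 1
     else psiAux l c T statRepN f q (T i (statRepN a.1 a.2.1 a.2.2 0))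
       (u + (c i : ℤ) - ((a.1 : ℤ) + (if a.2.2 then 0 else (a.2.1 : ℤ)) + (((0:ℕ)) : ℤ)))
       (if a.2.2 then a.2.1 else 0) n)

section Infra2

variable {l : ℕ} {c : Fin l → ℕ} {T : Fin l → ℕ → Fin l}
  {f : ℕ → ℕ → ℝ} {q : ℝ}

lemma summable_onestep (hfnn : ∀ x y, 0 ≤ f x y) (hfsum : ∑' p : ℕ × ℕ, f p.1 p.2 = 1)
    (hq0 : 0 ≤ q) (hq1 : q ≤ 1) (i : Fin l) (u : ℤ) (n : ℕ) :
    Summable (onestep l c T f q i u n) :=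
  summable_wstep hfnn hfsum hq0 hq1
    (fun a => (if u + (c i : ℤ) - ((a.1 : ℤ) + (if a.2.2 then 0 else (a.2.1 : ℤ))
        + (((0:ℕ)) : ℤ)) < 0
      then 1
      else psiAux l c T statRepN f q (T i (statRepN a.1 a.2.1 a.2.2 0))
        (u + (c i : ℤ) - ((a.1 : ℤ) + (if a.2.2 then 0 else (a.2.1 : ℤ)) + (((0:ℕ)) : ℤ)))
        (if a.2.2 then a.2.1 else 0) n))
    (fun a => ite_psiAux_nonneg hfnn hq0 hq1 n _ _ _ _ _)
    (fun a => ite_psiAux_le_one hfnn hfsum hq0 hq1 n _ _ _ _ _)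

lemma main_step (hfnn : ∀ x y, 0 ≤ f x y) (hfsum : ∑' p : ℕ × ℕ, f p.1 p.2 = 1)
    (hq0 : 0 ≤ q) (hq1 : q ≤ 1) (i : Fin l) (u : ℤ) (hu : 0 ≤ u) (n : ℕ) :
    psi l c T statRepN f q i u (n + 1) =
      ∑' p : ℕ × ℕ, (onestep l c T f q i u n (p.1, p.2, false)
        + onestep l c T f q i u n (p.1, p.2, true)) := by
  have hstep := psiAux_step (c := c) (T := T) (stat := statRepN) hfnn hfsum hq0 hq1 i u hu 0 n
  show psiAux l c T statRepN f q i u 0 (n + 1) = _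
  rw [hstep]
  have hos : Summable (onestep l c T f q i u n) := summable_onestep hfnn hfsum hq0 hq1 i u n
  rw [show (∑' a : ℕ × ℕ × Bool, w f q a *
      (if u + (c i : ℤ) - ((a.1 : ℤ) + (if a.2.2 then 0 else (a.2.1 : ℤ)) + (((0:ℕ)) : ℤ)) < 0
       then 1
       else psiAux l c T statRepN f q (T i (statRepN a.1 a.2.1 a.2.2 0))
         (u + (c i : ℤ) - ((a.1 : ℤ) + (if a.2.2 then 0 else (a.2.1 : ℤ)) + (((0:ℕ)) : ℤ)))
         (if a.2.2 then a.2.1 else 0) n))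
      = ∑' a : ℕ × ℕ × Bool, onestep l c T f q i u n a from rfl]
  rw [← Equiv.tsum_eq (Equiv.prodAssoc ℕ ℕ Bool) (onestep l c T f q i u n)]
  have hsum2 : Summable ((onestep l c T f q i u n) ∘ (Equiv.prodAssoc ℕ ℕ Bool)) :=
    (Equiv.summable_iff (Equiv.prodAssoc ℕ ℕ Bool) (f := onestep l c T f q i u n)).mpr hos
  have hsum2' : Summable (fun pr : (ℕ × ℕ) × Bool =>
      onestep l c T f q i u n (Equiv.prodAssoc ℕ ℕ Bool pr)) := hsum2
  rw [Summable.tsum_prod hsum2']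
  refine tsum_congr fun p => ?_
  rw [tsum_bool]
  rfl

end Infra2

section Infra

variable {l : ℕ} {c : Fin l → ℕ} {T : Fin l → ℕ → Fin l}
  {stat : ℕ → ℕ → Bool → ℕ → ℕ} {f : ℕ → ℕ → ℝ} {q : ℝ}

section Regions

variable (f)

lemma regionE1 (m : ℕ) (V : ℕ → ℝ) :
    ∑' p : ℕ × ℕ, (if 1 ≤ p.1 ∧ p.1 ≤ m ∧ p.2 = 0 then V p.1 * f p.1 p.2 else 0)
      = ∑ x ∈ Finset.Icc 1 m, V x * f x 0 := by
  rw [tsum_eq_sum (s := (Finset.Icc 1 m) ×ˢ {0})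
    (f := fun p : ℕ × ℕ => if 1 ≤ p.1 ∧ p.1 ≤ m ∧ p.2 = 0 then V p.1 * f p.1 p.2 else 0) ?_]
  · rw [Finset.sum_product]
    refine Finset.sum_congr rfl fun x hx => ?_
    rw [Finset.mem_Icc] at hx
    rw [Finset.sum_singleton, if_pos ⟨hx.1, hx.2, rfl⟩]
  · intro p hp
    rw [if_neg]
    rintro ⟨h1, h2, h3⟩
    exact hp (Finset.mem_product.mpr ⟨Finset.mem_Icc.mpr ⟨h1, h2⟩, by simp [h3]⟩)

lemma regionE2a (m : ℕ) (W : ℕ → ℕ → ℝ) :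
    ∑' p : ℕ × ℕ, (if 1 ≤ p.1 ∧ p.1 ≤ m - 1 ∧ 1 ≤ p.2 ∧ p.2 ≤ m - p.1
        then W p.1 p.2 * f p.1 p.2 else 0)
      = ∑ x ∈ Finset.Icc 1 (m - 1), ∑ y ∈ Finset.Icc 1 (m - x), W x y * f x y := by
  rw [tsum_eq_sum (s := (Finset.Icc 1 (m - 1)) ×ˢ (Finset.Icc 1 m))
    (f := fun p : ℕ × ℕ => if 1 ≤ p.1 ∧ p.1 ≤ m - 1 ∧ 1 ≤ p.2 ∧ p.2 ≤ m - p.1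
        then W p.1 p.2 * f p.1 p.2 else 0) ?_]
  · rw [Finset.sum_product]
    refine Finset.sum_congr rfl fun x hx => ?_
    rw [Finset.mem_Icc] at hx
    have h1 : ∀ y ∈ Finset.Icc 1 m,
        (if 1 ≤ x ∧ x ≤ m - 1 ∧ 1 ≤ y ∧ y ≤ m - x then W x y * f x y else 0)
          = if y ∈ Finset.Icc 1 (m - x) then W x y * f x y else 0 := by
      intro y hy
      exact if_congr (by rw [Finset.mem_Icc]; omega) rfl rfl
    rw [Finset.sum_congr rfl h1, Finset.sum_ite_mem,
      Finset.inter_eq_right.mpr (Finset.Icc_subset_Icc_right (by omega))]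
  · intro p hp
    rw [if_neg]
    rintro ⟨h1, h2, h3, h4⟩
    refine hp (Finset.mem_product.mpr ⟨Finset.mem_Icc.mpr ⟨h1, h2⟩, Finset.mem_Icc.mpr ⟨h3, by omega⟩⟩)

lemma regionE2b (m k : ℕ) (V : ℕ → ℝ) :
    ∑' p : ℕ × ℕ, (if 1 ≤ p.1 ∧ p.1 ≤ m ∧ m - p.1 + 1 ≤ p.2 ∧ p.2 ≤ m - p.1 + k
        then V (p.2 - (m - p.1)) * f p.1 p.2 else 0)
      = ∑ y ∈ Finset.Icc 1 k, V y * xi f y m := by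
  rw [tsum_eq_sum (s := (Finset.Icc 1 m) ×ˢ (Finset.Icc 1 (m + k)))
    (f := fun p : ℕ × ℕ => if 1 ≤ p.1 ∧ p.1 ≤ m ∧ m - p.1 + 1 ≤ p.2 ∧ p.2 ≤ m - p.1 + k
        then V (p.2 - (m - p.1)) * f p.1 p.2 else 0) ?_]
  · rw [Finset.sum_product]
    have hinner : ∀ x ∈ Finset.Icc 1 m,
        (∑ y ∈ Finset.Icc 1 (m + k),
          if 1 ≤ x ∧ x ≤ m ∧ m - x + 1 ≤ y ∧ y ≤ m - x + k
            then V (y - (m - x)) * f x y else 0)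
          = ∑ y ∈ Finset.Icc 1 k, V y * f x (y + m - x) := by
      intro x hx
      rw [Finset.mem_Icc] at hx
      have h1 : ∀ y ∈ Finset.Icc 1 (m + k),
          (if 1 ≤ x ∧ x ≤ m ∧ m - x + 1 ≤ y ∧ y ≤ m - x + k
            then V (y - (m - x)) * f x y else 0)
            = if y ∈ Finset.Icc (m - x + 1) (m - x + k) then V (y - (m - x)) * f x y else 0 := by
        intro y hy
        exact if_congr (by rw [Finset.mem_Icc]; omega) rfl rfl
      rw [Finset.sum_congr rfl h1, Finset.sum_ite_mem,
        Finset.inter_eq_right.mpr (Finset.Icc_subset_Icc (by omega) (by omega))]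
      have h2 : Finset.Icc (m - x + 1) (m - x + k)
          = Finset.map (addLeftEmbedding (m - x)) (Finset.Icc 1 k) := by
        rw [Finset.map_add_left_Icc]
      rw [h2, Finset.sum_map]
      refine Finset.sum_congr rfl fun y hy => ?_
      rw [Finset.mem_Icc] at hy
      simp only [addLeftEmbedding_apply]
      have h3 : m - x + y - (m - x) = y := by omega
      have h4 : m - x + y = y + m - x := by omega
      rw [h3, h4]
    rw [Finset.sum_congr rfl hinner, Finset.sum_comm]
    refine Finset.sum_congr rfl fun y hy => ?_
    rw [xi, Finset.mul_sum]
  · intro p hp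
    rw [if_neg]
    rintro ⟨h1, h2, h3, h4⟩
    exact hp (Finset.mem_product.mpr ⟨Finset.mem_Icc.mpr ⟨h1, h2⟩,
      Finset.mem_Icc.mpr ⟨by omega, by omega⟩⟩)

lemma regionTail (hfnn : ∀ x y, 0 ≤ f x y) (hF : Summable (fun p : ℕ × ℕ => f p.1 p.2))
    (m b : ℕ) :
    ∑' p : ℕ × ℕ, (if 1 ≤ p.1 ∧ p.1 ≤ m ∧ m - p.1 + b + 1 ≤ p.2 then f p.1 p.2 else 0)
      = ∑' k : ℕ, xi f (b + 1 + k) m := by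
  have hsum : Summable (fun p : ℕ × ℕ =>
      if 1 ≤ p.1 ∧ p.1 ≤ m ∧ m - p.1 + b + 1 ≤ p.2 then f p.1 p.2 else 0) :=
    Summable.of_nonneg_of_le (fun p => by split <;> [exact hfnn _ _; norm_num])
      (fun p => by split <;> [exact le_refl _; exact hfnn _ _]) hF
  rw [Summable.tsum_prod hsum]
  have hout : ∀ x ∉ Finset.Icc 1 m,
      (∑' y : ℕ, if 1 ≤ x ∧ x ≤ m ∧ m - x + b + 1 ≤ y then f x y else 0) = 0 := by
    intro x hx
    rw [Finset.mem_Icc] at hx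
    have : ∀ y : ℕ, (if 1 ≤ x ∧ x ≤ m ∧ m - x + b + 1 ≤ y then f x y else 0) = 0 :=
      fun y => if_neg (by omega)
    rw [tsum_congr this, tsum_zero]
  rw [tsum_eq_sum (s := Finset.Icc 1 m) hout]
  have hre : ∀ x ∈ Finset.Icc 1 m,
      (∑' y : ℕ, if 1 ≤ x ∧ x ≤ m ∧ m - x + b + 1 ≤ y then f x y else 0)
        = ∑' k : ℕ, f x (b + 1 + k + m - x) := by
    intro x hx
    rw [Finset.mem_Icc] at hx
    have hinj : Function.Injective (fun k : ℕ => m - x + b + 1 + k) := fun a b h => by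
      simpa using h
    have hsupp : Function.support
        (fun y => if 1 ≤ x ∧ x ≤ m ∧ m - x + b + 1 ≤ y then f x y else 0)
        ⊆ Set.range (fun k : ℕ => m - x + b + 1 + k) := by
      intro y hy
      by_cases hc : 1 ≤ x ∧ x ≤ m ∧ m - x + b + 1 ≤ y
      · exact ⟨y - (m - x + b + 1), by dsimp only; omega⟩
      · exact absurd (if_neg hc) hy
    rw [← Function.Injective.tsum_eq hinj hsupp]
    refine tsum_congr fun k => ?_
    rw [if_pos ⟨hx.1, hx.2, by omega⟩]
    congr 1
    omega
  rw [Finset.sum_congr rfl hre]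
  have hswap : ∑' k : ℕ, xi f (b + 1 + k) m
      = ∑ x ∈ Finset.Icc 1 m, ∑' k : ℕ, f x (b + 1 + k + m - x) := by
    have hsx : ∀ x ∈ Finset.Icc 1 m, Summable (fun k : ℕ => f x (b + 1 + k + m - x)) := by
      intro x hx
      rw [Finset.mem_Icc] at hx
      have hfx : Summable (fun y : ℕ => f x y) := hF.prod_factor x
      have hinj : Function.Injective (fun k : ℕ => b + 1 + k + m - x) := fun a b' h => by
        simp only at h; omega
      exact hfx.comp_injective hinj
    rw [← Summable.tsum_finsetSum hsx]
    refine tsum_congr fun k => ?_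
    rw [xi]
  rw [hswap]

lemma regionE4 (hfnn : ∀ x y, 0 ≤ f x y) (hF : Summable (fun p : ℕ × ℕ => f p.1 p.2))
    (m : ℕ) :
    ∑' p : ℕ × ℕ, (if m + 1 ≤ p.1 then f p.1 p.2 else 0) = ∑' k : ℕ, fX f (m + 1 + k) := by
  have hsum : Summable (fun p : ℕ × ℕ => if m + 1 ≤ p.1 then f p.1 p.2 else 0) :=
    Summable.of_nonneg_of_le (fun p => by split <;> [exact hfnn _ _; norm_num])
      (fun p => by split <;> [exact le_refl _; exact hfnn _ _]) hF
  rw [Summable.tsum_prod hsum]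
  have h1 : ∀ x : ℕ, (∑' y : ℕ, if m + 1 ≤ x then f x y else 0)
      = (if m + 1 ≤ x then fX f x else 0) := by
    intro x
    by_cases h : m + 1 ≤ x
    · simp only [h, if_true]
      rfl
    · simp only [h, if_false]
      exact tsum_zero
  rw [tsum_congr h1]
  have hinj : Function.Injective (fun k : ℕ => m + 1 + k) := fun a b h => by simpa using h
  have hsupp : Function.support (fun x => if m + 1 ≤ x then fX f x else 0)
      ⊆ Set.range (fun k : ℕ => m + 1 + k) := by
    intro x hx
    by_cases hc : m + 1 ≤ x
    · exact ⟨x - (m + 1), by dsimp only; omega⟩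
    · exact absurd (if_neg hc) hx
  rw [← Function.Injective.tsum_eq hinj hsupp]
  exact tsum_congr fun k => if_pos (by omega)

end Regions

lemma psi_def (j : Fin l) (v : ℤ) (n : ℕ) :
    psi l c T stat f q j v n = psiAux l c T stat f q j v 0 n := rfl

lemma pointwise_decomp (hfnn : ∀ x y, 0 ≤ f x y) (hfsum : ∑' p : ℕ × ℕ, f p.1 p.2 = 1)
    (hfdeg : ∀ y : ℕ, 0 < y → f 0 y = 0) (hq0 : 0 ≤ q) (hq1 : q ≤ 1)
    (i : Fin l) (hci : 1 ≤ c i) (u n : ℕ) (hn : 1 ≤ n) (p : ℕ × ℕ) :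
    onestep l c T f q i (u : ℤ) n (p.1, p.2, false)
      + onestep l c T f q i (u : ℤ) n (p.1, p.2, true)
      = (if p = ((0 : ℕ), (0 : ℕ))
          then psi l c T statRepN f q (T i 0) ((u + c i : ℕ) : ℤ) n * f 0 0 else 0)
      + (if 1 ≤ p.1 ∧ p.1 ≤ u + c i ∧ p.2 = 0
          then psi l c T statRepN f q (T i 1) ((u + c i - p.1 : ℕ) : ℤ) n * f p.1 p.2 else 0)
      + (if 1 ≤ p.1 ∧ p.1 ≤ u + c i - 1 ∧ 1 ≤ p.2 ∧ p.2 ≤ u + c i - p.1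
          then psi l c T statRepN f q (T i 2) ((u + c i - p.1 - p.2 : ℕ) : ℤ) n * f p.1 p.2 else 0)
      + q * (if 1 ≤ p.1 ∧ p.1 ≤ u + c i ∧ u + c i - p.1 + 1 ≤ p.2
              ∧ p.2 ≤ u + c i - p.1 + c (T i 2)
          then psiAux l c T statRepN f q (T i 2) 0 (p.2 - (u + c i - p.1)) n * f p.1 p.2 else 0)
      + q * (if 1 ≤ p.1 ∧ p.1 ≤ u + c i ∧ u + c i - p.1 + c (T i 2) + 1 ≤ p.2
          then f p.1 p.2 else 0)
      + (1 - q) * (if 1 ≤ p.1 ∧ p.1 ≤ u + c i ∧ u + c i - p.1 + 0 + 1 ≤ p.2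
          then f p.1 p.2 else 0)
      + (if u + c i + 1 ≤ p.1 then f p.1 p.2 else 0) := by
  obtain ⟨x, y⟩ := p
  simp only [onestep, w, statRepN]
  norm_num
  by_cases hx0 : x = 0
  · subst hx0
    by_cases hy0 : y = 0
    · -- R1 : x = 0, y = 0
      subst hy0
      rw [if_neg (show ¬((u:ℤ) + (c i : ℤ) < ((0:ℕ):ℤ) + ((0:ℕ):ℤ)) from by omega)]
      rw [if_neg (show ¬((u:ℤ) + (c i : ℤ) < ((0:ℕ):ℤ)) from by omega)]
      rw [if_pos (show (0:ℕ) = 0 ∧ (0:ℕ) = 0 from ⟨rfl, rfl⟩)]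
      rw [if_neg (show ¬(1 ≤ 0 ∧ 0 ≤ u + c i ∧ (0:ℕ) = 0) from by omega)]
      rw [if_neg (show ¬(1 ≤ 0 ∧ 0 ≤ u + c i - 1 ∧ 1 ≤ 0 ∧ 0 ≤ u + c i - 0) from by omega)]
      rw [if_neg (show ¬(1 ≤ 0 ∧ 0 ≤ u + c i ∧ u + c i - 0 < 0
        ∧ 0 ≤ u + c i - 0 + c (T i 2)) from by omega)]
      rw [if_neg (show ¬(1 ≤ 0 ∧ 0 ≤ u + c i ∧ u + c i - 0 + c (T i 2) < 0) from by omega)]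
      rw [if_neg (show ¬(1 ≤ 0 ∧ 0 ≤ u + c i ∧ u + c i - 0 < 0) from by omega)]
      rw [if_neg (show ¬(u + c i < 0) from by omega)]
      rw [psi_def]
      norm_num
      ring
    · -- R0y : x = 0, 0 < y
      have hy1 : 0 < y := by omega
      rw [if_neg (show ¬((0:ℕ) = 0 ∧ y = 0) from by omega)]
      rw [if_neg (show ¬(1 ≤ 0 ∧ 0 ≤ u + c i ∧ y = 0) from by omega)]
      rw [if_neg (show ¬(1 ≤ 0 ∧ 0 ≤ u + c i - 1 ∧ 1 ≤ y ∧ y ≤ u + c i - 0) from by omega)]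
      rw [if_neg (show ¬(1 ≤ 0 ∧ 0 ≤ u + c i ∧ u + c i - 0 < y
        ∧ y ≤ u + c i - 0 + c (T i 2)) from by omega)]
      rw [if_neg (show ¬(1 ≤ 0 ∧ 0 ≤ u + c i ∧ u + c i - 0 + c (T i 2) < y) from by omega)]
      rw [if_neg (show ¬(1 ≤ 0 ∧ 0 ≤ u + c i ∧ u + c i - 0 < y) from by omega)]
      rw [if_neg (show ¬(u + c i < 0) from by omega)]
      rw [hfdeg y hy1]
      simp
  · have hx1 : 0 < x := by omega
    by_cases hxm : x ≤ u + c i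
    · by_cases hy0 : y = 0
      · -- R2 : 1 ≤ x ≤ m, y = 0
        subst hy0
        rw [if_neg (show ¬((u:ℤ) + (c i : ℤ) < (x:ℤ) + ((0:ℕ):ℤ)) from by omega)]
        rw [if_neg (show ¬((u:ℤ) + (c i : ℤ) < (x:ℤ)) from by omega)]
        rw [if_neg (show ¬(x = 0 ∧ (0:ℕ) = 0) from by omega)]
        rw [if_pos (show 1 ≤ x ∧ x ≤ u + c i ∧ (0:ℕ) = 0 from by omega)]
        rw [if_neg (show ¬(1 ≤ x ∧ x ≤ u + c i - 1 ∧ 1 ≤ 0 ∧ 0 ≤ u + c i - x) from by omega)]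
        rw [if_neg (show ¬(1 ≤ x ∧ x ≤ u + c i ∧ u + c i - x < 0
          ∧ 0 ≤ u + c i - x + c (T i 2)) from by omega)]
        rw [if_neg (show ¬(1 ≤ x ∧ x ≤ u + c i ∧ u + c i - x + c (T i 2) < 0) from by omega)]
        rw [if_neg (show ¬(1 ≤ x ∧ x ≤ u + c i ∧ u + c i - x < 0) from by omega)]
        rw [if_neg (show ¬(u + c i < x) from by omega)]
        rw [psi_def]
        simp only [if_pos hx1]
        rw [show ((u + c i - x : ℕ) : ℤ) = (u:ℤ) + (c i : ℤ) - ((x:ℤ) + ((0:ℕ):ℤ))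
          from by push_cast; omega]
        norm_num
        ring
      · have hy1 : 0 < y := by omega
        by_cases hxy : x + y ≤ u + c i
        · -- R3 : interior
          rw [if_neg (show ¬((u:ℤ) + (c i : ℤ) < (x:ℤ) + (y:ℤ)) from by omega)]
          rw [if_neg (show ¬((u:ℤ) + (c i : ℤ) < (x:ℤ)) from by omega)]
          rw [if_neg (show ¬(x = 0 ∧ y = 0) from by omega)]
          rw [if_neg (show ¬(1 ≤ x ∧ x ≤ u + c i ∧ y = 0) from by omega)]
          rw [if_pos (show 1 ≤ x ∧ x ≤ u + c i - 1 ∧ 1 ≤ y ∧ y ≤ u + c i - x from by omega)]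
          rw [if_neg (show ¬(1 ≤ x ∧ x ≤ u + c i ∧ u + c i - x < y
            ∧ y ≤ u + c i - x + c (T i 2)) from by omega)]
          rw [if_neg (show ¬(1 ≤ x ∧ x ≤ u + c i ∧ u + c i - x + c (T i 2) < y) from by omega)]
          rw [if_neg (show ¬(1 ≤ x ∧ x ≤ u + c i ∧ u + c i - x < y) from by omega)]
          rw [if_neg (show ¬(u + c i < x) from by omega)]
          simp only [if_pos hx1, if_pos hy1]
          rw [show psiAux l c T statRepN f q (T i (1 + 1)) ((u:ℤ) + (c i : ℤ) - (x:ℤ)) y n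
              = psiAux l c T statRepN f q (T i (1 + 1))
                ((u:ℤ) + (c i : ℤ) - ((x:ℤ) + (y:ℤ))) 0 n from
            psiAux_shift (T i (1 + 1)) _ _ y 0 (by omega) (by omega) (by push_cast; omega) n]
          rw [psi_def]
          rw [show ((u + c i - x - y : ℕ) : ℤ) = (u:ℤ) + (c i : ℤ) - ((x:ℤ) + (y:ℤ))
            from by push_cast; omega]
          norm_num
          ring
        · -- R4 / R5 : 1 ≤ x ≤ m, y > m - x
          rw [if_pos (show (u:ℤ) + (c i : ℤ) < (x:ℤ) + (y:ℤ) from by omega)]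
          rw [if_neg (show ¬((u:ℤ) + (c i : ℤ) < (x:ℤ)) from by omega)]
          rw [if_neg (show ¬(x = 0 ∧ y = 0) from by omega)]
          rw [if_neg (show ¬(1 ≤ x ∧ x ≤ u + c i ∧ y = 0) from by omega)]
          rw [if_neg (show ¬(1 ≤ x ∧ x ≤ u + c i - 1 ∧ 1 ≤ y ∧ y ≤ u + c i - x) from by omega)]
          rw [if_pos (show 1 ≤ x ∧ x ≤ u + c i ∧ u + c i - x < y from by omega)]
          rw [if_neg (show ¬(u + c i < x) from by omega)]
          simp only [if_pos hx1, if_pos hy1]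
          rw [show psiAux l c T statRepN f q (T i (1 + 1)) ((u:ℤ) + (c i : ℤ) - (x:ℤ)) y n
              = psiAux l c T statRepN f q (T i (1 + 1)) 0 (y - (u + c i - x)) n from
            psiAux_shift (T i (1 + 1)) _ _ y (y - (u + c i - x)) (by omega) (by omega)
              (by push_cast; omega) n]
          by_cases hyc : y ≤ u + c i - x + c (T i 2)
          · -- R4
            rw [if_pos (show 1 ≤ x ∧ x ≤ u + c i ∧ u + c i - x < y
              ∧ y ≤ u + c i - x + c (T i 2) from by omega)]
            rw [if_neg (show ¬(1 ≤ x ∧ x ≤ u + c i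
              ∧ u + c i - x + c (T i 2) < y) from by omega)]
            norm_num
            ring
          · -- R5
            rw [if_neg (show ¬(1 ≤ x ∧ x ≤ u + c i ∧ u + c i - x < y
              ∧ y ≤ u + c i - x + c (T i 2)) from by omega)]
            rw [if_pos (show 1 ≤ x ∧ x ≤ u + c i
              ∧ u + c i - x + c (T i 2) < y from by omega)]
            rw [show (1 + 1 : ℕ) = 2 from rfl] at *
            rw [psiAux_certain hfnn hfsum hq0 hq1 (T i 2) (y - (u + c i - x)) n (by omega) hn]
            ring
    · -- R6 : x > m
      rw [if_pos (show (u:ℤ) + (c i : ℤ) < (x:ℤ) + (y:ℤ) from by omega)]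
      rw [if_pos (show (u:ℤ) + (c i : ℤ) < (x:ℤ) from by omega)]
      rw [if_neg (show ¬(x = 0 ∧ y = 0) from by omega)]
      rw [if_neg (show ¬(1 ≤ x ∧ x ≤ u + c i ∧ y = 0) from by omega)]
      rw [if_neg (show ¬(1 ≤ x ∧ x ≤ u + c i - 1 ∧ 1 ≤ y ∧ y ≤ u + c i - x) from by omega)]
      rw [if_neg (show ¬(1 ≤ x ∧ x ≤ u + c i ∧ u + c i - x < y
        ∧ y ≤ u + c i - x + c (T i 2)) from by omega)]
      rw [if_neg (show ¬(1 ≤ x ∧ x ≤ u + c i ∧ u + c i - x + c (T i 2) < y) from by omega)]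
      rw [if_neg (show ¬(1 ≤ x ∧ x ≤ u + c i ∧ u + c i - x < y) from by omega)]
      rw [if_pos (show u + c i < x from by omega)]
      ring


lemma pointwise_decomp0 (hfdeg : ∀ y : ℕ, 0 < y → f 0 y = 0)
    (i : Fin l) (u : ℕ) (p : ℕ × ℕ) :
    onestep l c T f q i (u : ℤ) 0 (p.1, p.2, false)
      + onestep l c T f q i (u : ℤ) 0 (p.1, p.2, true)
      = (1 - q) * (if 1 ≤ p.1 ∧ p.1 ≤ u + c i ∧ u + c i - p.1 + 0 + 1 ≤ p.2
          then f p.1 p.2 else 0)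
      + (if u + c i + 1 ≤ p.1 then f p.1 p.2 else 0) := by
  obtain ⟨x, y⟩ := p
  simp only [onestep, w, statRepN, psiAux_zero]
  norm_num
  split_ifs with h1 h2 h3 h4 <;>
    first
      | ring1
      | (exfalso; omega)
      | (have hx0 : x = 0 := by omega
         have hy1 : 0 < y := by omega
         subst hx0
         rw [hfdeg y hy1]
         ring1)


lemma summable_ite_f (hfnn : ∀ x y, 0 ≤ f x y) (hF : Summable (fun p : ℕ × ℕ => f p.1 p.2))
    (P : ℕ × ℕ → Prop) [DecidablePred P] :
    Summable (fun p : ℕ × ℕ => if P p then f p.1 p.2 else 0) :=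
  Summable.of_nonneg_of_le (fun p => by split <;> [exact hfnn _ _; norm_num])
    (fun p => by split <;> [exact le_refl _; exact hfnn _ _]) hF

lemma summable_ite_mul_f (hfnn : ∀ x y, 0 ≤ f x y)
    (hF : Summable (fun p : ℕ × ℕ => f p.1 p.2))
    (P : ℕ × ℕ → Prop) [DecidablePred P] (V : ℕ × ℕ → ℝ)
    (hV0 : ∀ p, 0 ≤ V p) (hV1 : ∀ p, V p ≤ 1) :
    Summable (fun p : ℕ × ℕ => if P p then V p * f p.1 p.2 else 0) :=
  Summable.of_nonneg_of_le
    (fun p => by split <;> [exact mul_nonneg (hV0 p) (hfnn _ _); norm_num])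
    (fun p => by split <;> [exact mul_le_of_le_one_left (hfnn _ _) (hV1 p); exact hfnn _ _]) hF

end Infra


/-- Theorem 3: recursion for ψ when premiums are adjusted according to
the reported number of claims. -/
theorem theorem3_reported_number
    (l : ℕ) (c : Fin l → ℕ) (hcpos : ∀ i, 0 < c i) (hcmono : StrictMono c)
    (f : ℕ → ℕ → ℝ) (hfnn : ∀ x y, 0 ≤ f x y)
    (hfsum : ∑' p : ℕ × ℕ, f p.1 p.2 = 1)
    (hfdeg : ∀ y : ℕ, 0 < y → f 0 y = 0)
    (q : ℝ) (hq0 : 0 ≤ q) (hq1 : q ≤ 1)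
    (t : Fin l → Fin l → ℕ → ℝ) (T : Fin l → ℕ → Fin l)
    (hT : ∀ i j s, t i j s = if j = T i s then (1 : ℝ) else 0)
    (u : ℕ) (i : Fin l) (n : ℕ) (hn : 1 ≤ n) :
    psi l c T statRepN f q i (u : ℤ) (n + 1) =
        (∑ j : Fin l, t i j 0 * psi l c T statRepN f q j ((u + c i : ℕ) : ℤ) n * f 0 0)
      + (∑ j : Fin l, t i j 1 * (∑ x ∈ Finset.Icc 1 (u + c i),
          psi l c T statRepN f q j ((u + c i - x : ℕ) : ℤ) n * f x 0))
      + (∑ j : Fin l, t i j 2 *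
          ((∑ x ∈ Finset.Icc 1 (u + c i - 1), ∑ y ∈ Finset.Icc 1 (u + c i - x),
              psi l c T statRepN f q j ((u + c i - x - y : ℕ) : ℤ) n * f x y)
            + q * (∑ y ∈ Finset.Icc 1 (c j),
                psiAux l c T statRepN f q j 0 y n * xi f y (u + c i))
            + q * (∑' k : ℕ, xi f (c j + 1 + k) (u + c i))))
      + (1 - q) * (∑' k : ℕ, xi f (k + 1) (u + c i))
      + (∑' k : ℕ, fX f (u + c i + 1 + k)) ∧
    psi l c T statRepN f q i (u : ℤ) 1 =
      (1 - q) * (∑' k : ℕ, xi f (k + 1) (u + c i))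
      + (∑' k : ℕ, fX f (u + c i + 1 + k)) := by
  have hF : Summable (fun p : ℕ × ℕ => f p.1 p.2) := summable_f hfsum
  have hci : 1 ≤ c i := hcpos i
  have hpsi0 : ∀ (j : Fin l) (v : ℤ) (z m : ℕ), 0 ≤ psiAux l c T statRepN f q j v z m :=
    fun j v z m => psiAux_nonneg hfnn hq0 hq1 j v z m
  have hpsi1 : ∀ (j : Fin l) (v : ℤ) (z m : ℕ), psiAux l c T statRepN f q j v z m ≤ 1 :=
    fun j v z m => psiAux_le_one hfnn hfsum hq0 hq1 j v z m
  have hxi0 : (∑' k : ℕ, xi f (0 + 1 + k) (u + c i)) = ∑' k : ℕ, xi f (k + 1) (u + c i) :=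
    tsum_congr fun k => by rw [show 0 + 1 + k = k + 1 from by omega]
  -- summability of the seven pieces
  have hs0 : Summable (fun p : ℕ × ℕ => if p = ((0 : ℕ), (0 : ℕ))
      then psi l c T statRepN f q (T i 0) ((u + c i : ℕ) : ℤ) n * f 0 0 else 0) := by
    refine Summable.of_nonneg_of_le ?_ ?_ hF
    · intro p
      split
      · exact mul_nonneg (hpsi0 _ _ _ _) (hfnn 0 0)
      · norm_num
    · intro p
      split_ifs with h
      · subst h
        exact mul_le_of_le_one_left (hfnn 0 0) (hpsi1 _ _ _ _)
      · exact hfnn _ _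
  have hs1 : Summable (fun p : ℕ × ℕ => if 1 ≤ p.1 ∧ p.1 ≤ u + c i ∧ p.2 = 0
      then psi l c T statRepN f q (T i 1) ((u + c i - p.1 : ℕ) : ℤ) n * f p.1 p.2 else 0) :=
    summable_ite_mul_f hfnn hF _ _ (fun p => hpsi0 _ _ _ _) (fun p => hpsi1 _ _ _ _)
  have hs2 : Summable (fun p : ℕ × ℕ =>
      if 1 ≤ p.1 ∧ p.1 ≤ u + c i - 1 ∧ 1 ≤ p.2 ∧ p.2 ≤ u + c i - p.1
      then psi l c T statRepN f q (T i 2) ((u + c i - p.1 - p.2 : ℕ) : ℤ) n * f p.1 p.2 else 0) :=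
    summable_ite_mul_f hfnn hF _ _ (fun p => hpsi0 _ _ _ _) (fun p => hpsi1 _ _ _ _)
  have hs3 : Summable (fun p : ℕ × ℕ => q *
      (if 1 ≤ p.1 ∧ p.1 ≤ u + c i ∧ u + c i - p.1 + 1 ≤ p.2
          ∧ p.2 ≤ u + c i - p.1 + c (T i 2)
        then psiAux l c T statRepN f q (T i 2) 0 (p.2 - (u + c i - p.1)) n * f p.1 p.2 else 0)) :=
    Summable.mul_left q (summable_ite_mul_f hfnn hF _ _
      (fun p => hpsi0 _ _ _ _) (fun p => hpsi1 _ _ _ _))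
  have hs4 : Summable (fun p : ℕ × ℕ => q *
      (if 1 ≤ p.1 ∧ p.1 ≤ u + c i ∧ u + c i - p.1 + c (T i 2) + 1 ≤ p.2
        then f p.1 p.2 else 0)) :=
    Summable.mul_left q (summable_ite_f hfnn hF _)
  have hs5 : Summable (fun p : ℕ × ℕ => (1 - q) *
      (if 1 ≤ p.1 ∧ p.1 ≤ u + c i ∧ u + c i - p.1 + 0 + 1 ≤ p.2 then f p.1 p.2 else 0)) :=
    Summable.mul_left (1 - q) (summable_ite_f hfnn hF _)
  have hs6 : Summable (fun p : ℕ × ℕ => if u + c i + 1 ≤ p.1 then f p.1 p.2 else 0) :=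
    summable_ite_f hfnn hF _
  constructor
  · -- main recursion
    have hmain := main_step (c := c) (T := T) hfnn hfsum hq0 hq1 i (u : ℤ) (by positivity) n
    rw [hmain]
    rw [tsum_congr (pointwise_decomp (c := c) (T := T) hfnn hfsum hfdeg hq0 hq1 i hci u n hn)]
    rw [Summable.tsum_add (((((hs0.add hs1).add hs2).add hs3).add hs4).add hs5) hs6]
    rw [Summable.tsum_add ((((hs0.add hs1).add hs2).add hs3).add hs4) hs5]
    rw [Summable.tsum_add (((hs0.add hs1).add hs2).add hs3) hs4]
    rw [Summable.tsum_add ((hs0.add hs1).add hs2) hs3]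
    rw [Summable.tsum_add (hs0.add hs1) hs2]
    rw [Summable.tsum_add hs0 hs1]
    rw [tsum_ite_eq ((0 : ℕ), (0 : ℕ))
      (fun _ => psi l c T statRepN f q (T i 0) ((u + c i : ℕ) : ℤ) n * f 0 0)]
    rw [regionE1 f (u + c i) (fun x => psi l c T statRepN f q (T i 1) ((u + c i - x : ℕ) : ℤ) n)]
    rw [regionE2a f (u + c i)
      (fun x y => psi l c T statRepN f q (T i 2) ((u + c i - x - y : ℕ) : ℤ) n)]
    rw [tsum_mul_left, tsum_mul_left, tsum_mul_left]
    rw [regionE2b f (u + c i) (c (T i 2)) (fun y => psiAux l c T statRepN f q (T i 2) 0 y n)]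
    rw [regionTail f hfnn hF (u + c i) (c (T i 2))]
    rw [regionTail f hfnn hF (u + c i) 0]
    rw [regionE4 f hfnn hF (u + c i)]
    rw [hxi0]
    simp only [hT, ite_mul, one_mul, zero_mul, Finset.sum_ite_eq', Finset.mem_univ, if_true]
    ring
  · -- one-period formula
    have hmain : psi l c T statRepN f q i (u : ℤ) 1 =
        ∑' p : ℕ × ℕ, (onestep l c T f q i (u : ℤ) 0 (p.1, p.2, false)
          + onestep l c T f q i (u : ℤ) 0 (p.1, p.2, true)) :=
      main_step (c := c) (T := T) hfnn hfsum hq0 hq1 i (u : ℤ) (by positivity) 0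
    rw [hmain]
    rw [tsum_congr (pointwise_decomp0 (c := c) (T := T) hfdeg i u)]
    rw [Summable.tsum_add hs5 hs6]
    rw [tsum_mul_left]
    rw [regionTail f hfnn hF (u + c i) 0]
    rw [regionE4 f hfnn hF (u + c i)]
    rw [hxi0]


end DelayedClaims
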